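/- Let p be a joint PMF on V^n (n > 1) with marginals p_j satisfying p_j(x*_j) > 1 - ε for all j, and let q = ∏_j p_j. Then for any real r ≥ 1, the L^r distance satisfies ‖p - q‖_r < ((n-1)^r + 2n)^{1/r} · ε. -/

import Mathlib

open scoped BigOperators

/-- Weierstrass product inequality: `1 - ∑ (1 - f i) ≤ ∏ f i` for `f i ∈ [0,1]`. -/
lemma stmt6_weier {ι : Type*} (s : Finset ι) (f : ι → ℝ) (h0 : ∀ i ∈ s, 0 ≤ f i)
    (h1 : ∀ i ∈ s, f i ≤ 1) : 1 - ∑ i ∈ s, (1 - f i) ≤ ∏ i ∈ s, f i := by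
  induction s using Finset.cons_induction with
  | empty => simp
  | cons a s ha ih =>
    rw [Finset.prod_cons, Finset.sum_cons]
    have h0a := h0 a (Finset.mem_cons_self a s)
    have h1a := h1 a (Finset.mem_cons_self a s)
    have ih' := ih (fun i hi => h0 i (Finset.mem_cons_of_mem hi))
      (fun i hi => h1 i (Finset.mem_cons_of_mem hi))
    have hS : 0 ≤ ∑ i ∈ s, (1 - f i) := Finset.sum_nonneg fun i hi => by
      linarith [h1 i (Finset.mem_cons_of_mem hi)]
    nlinarith [mul_le_mul_of_nonneg_left ih' h0a,
      mul_nonneg (by linarith : (0:ℝ) ≤ 1 - f a) hS]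

/-- For `n > 1`, any `r ≥ 1`, under high-confidence marginals, the
`L^r` distance between the joint `p` and the product of marginals `q` satisfies
`‖p - q‖_r < ((n-1)^r + 2n)^{1/r} · ε`. -/
theorem stmt_6 {V : Type*} [Fintype V] [DecidableEq V] {n : ℕ} (hn : 1 < n)
    (p : (Fin n → V) → ℝ) (pm : Fin n → V → ℝ) (x' : Fin n → V) (ε : ℝ)
    (hp0 : ∀ z, 0 ≤ p z) (hp1 : ∑ z : Fin n → V, p z = 1)
    (hm : ∀ j v, pm j v = ∑ z : Fin n → V, if z j = v then p z else 0)
    (hconf : ∀ j, pm j (x' j) > 1 - ε) (hε : 0 < ε)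
    (r : ℝ) (hr : 1 ≤ r) :
    (∑ z : Fin n → V, |p z - ∏ j, pm j (z j)| ^ r) ^ (1 / r) <
      (((n : ℝ) - 1) ^ r + 2 * n) ^ (1 / r) * ε := by
  have hr0 : (0:ℝ) < r := by linarith
  have hrne : r ≠ 0 := ne_of_gt hr0
  have hn2 : (2:ℝ) ≤ (n:ℝ) := by exact_mod_cast hn
  -- basic facts about the marginals
  have hpm0 : ∀ j v, 0 ≤ pm j v := by
    intro j v; rw [hm]
    exact Finset.sum_nonneg fun z _ => by split_ifs; exacts [hp0 z, le_rfl]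
  have hpmsum : ∀ j, ∑ v, pm j v = 1 := by
    intro j
    simp_rw [hm, Finset.sum_comm (γ := V)]
    simpa using hp1
  have hpm1 : ∀ j v, pm j v ≤ 1 := by
    intro j v
    rw [← hpmsum j]
    exact Finset.single_le_sum (fun v _ => hpm0 j v) (Finset.mem_univ v)
  have hple : ∀ (z : Fin n → V) j, p z ≤ pm j (z j) := by
    intro z j
    rw [hm]
    have := Finset.single_le_sum
      (f := fun z' : Fin n → V => if z' j = z j then p z' else 0)
      (fun z' _ => by split_ifs; exacts [hp0 z', le_rfl])
      (Finset.mem_univ z)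
    simpa using this
  have hqle : ∀ (z : Fin n → V) j, (∏ j', pm j' (z j')) ≤ pm j (z j) := by
    intro z j
    rw [← Finset.prod_erase_mul Finset.univ _ (Finset.mem_univ j)]
    have h1 : ∏ j' ∈ Finset.univ.erase j, pm j' (z j') ≤ 1 :=
      Finset.prod_le_one (fun j' _ => hpm0 _ _) (fun j' _ => hpm1 _ _)
    calc (∏ j' ∈ Finset.univ.erase j, pm j' (z j')) * pm j (z j)
        ≤ 1 * pm j (z j) := mul_le_mul_of_nonneg_right h1 (hpm0 _ _)
      _ = pm j (z j) := one_mul _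
  have hq0 : ∀ z : Fin n → V, 0 ≤ ∏ j, pm j (z j) :=
    fun z => Finset.prod_nonneg fun j _ => hpm0 j (z j)
  have hqsum : ∑ z : Fin n → V, ∏ j, pm j (z j) = 1 := by
    rw [← Fintype.prod_sum (fun j v => pm j v)]
    simp [hpmsum]
  -- bad-event mass
  have hbad : ∀ j, (∑ z : Fin n → V, if z j ≠ x' j then p z else 0)
      = 1 - pm j (x' j) := by
    intro j
    have h := hm j (x' j)
    have h2 : (∑ z : Fin n → V, if z j = x' j then p z else 0)
        + (∑ z : Fin n → V, if z j ≠ x' j then p z else 0) = 1 := by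
      rw [← Finset.sum_add_distrib, ← hp1]
      refine Finset.sum_congr rfl fun z _ => ?_
      by_cases hz : z j = x' j <;> simp [hz]
    linarith
  have heps : ∀ j, 1 - pm j (x' j) < ε := fun j => by linarith [hconf j]
  have he0 : ∀ j, 0 ≤ 1 - pm j (x' j) := fun j => by linarith [hpm1 j (x' j)]
  -- union bound
  have hunion : ∀ (s : Finset (Fin n → V)) (t : Finset (Fin n)),
      (∀ z ∈ s, ∃ j ∈ t, z j ≠ x' j) →
      ∑ z ∈ s, p z ≤ ∑ j ∈ t, (1 - pm j (x' j)) := by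
    intro s t hst
    calc ∑ z ∈ s, p z ≤ ∑ z ∈ s, ∑ j ∈ t, (if z j ≠ x' j then p z else 0) := by
          refine Finset.sum_le_sum fun z hz => ?_
          obtain ⟨j, hjt, hj⟩ := hst z hz
          calc p z = (if z j ≠ x' j then p z else 0) := by simp [hj]
            _ ≤ ∑ j ∈ t, (if z j ≠ x' j then p z else 0) :=
              Finset.single_le_sum
                (f := fun j' => if z j' ≠ x' j' then p z else 0)
                (fun j' _ => by split_ifs; exacts [hp0 z, le_rfl]) hjt
      _ = ∑ j ∈ t, ∑ z ∈ s, (if z j ≠ x' j then p z else 0) := Finset.sum_comm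
      _ ≤ ∑ j ∈ t, ∑ z : Fin n → V, (if z j ≠ x' j then p z else 0) :=
          Finset.sum_le_sum fun j _ => Finset.sum_le_sum_of_subset_of_nonneg
            (Finset.subset_univ s) (fun z _ _ => by split_ifs; exacts [hp0 z, le_rfl])
      _ = ∑ j ∈ t, (1 - pm j (x' j)) := Finset.sum_congr rfl fun j _ => hbad j
  -- total mass bounds off the diagonal
  have hEtot : ∑ j, (1 - pm j (x' j)) ≤ (n:ℝ) * ε := by
    calc ∑ j, (1 - pm j (x' j)) ≤ ∑ _j : Fin n, ε :=
          Finset.sum_le_sum fun j _ => (heps j).le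
      _ = (n:ℝ) * ε := by simp [mul_comm]
  have hptail : ∑ z ∈ Finset.univ.erase x', p z ≤ (n:ℝ) * ε := by
    refine le_trans (hunion _ Finset.univ ?_) hEtot
    intro z hz
    obtain ⟨j, hj⟩ := Function.ne_iff.mp (Finset.ne_of_mem_erase hz)
    exact ⟨j, Finset.mem_univ j, hj⟩
  have hqx'ge : 1 - ∑ j, (1 - pm j (x' j)) ≤ ∏ j, pm j (x' j) :=
    stmt6_weier _ _ (fun j _ => hpm0 j (x' j)) (fun j _ => hpm1 j (x' j))
  have hqtail : ∑ z ∈ Finset.univ.erase x', (∏ j, pm j (z j)) ≤ (n:ℝ) * ε := by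
    have h1 : ∑ z ∈ Finset.univ.erase x', (∏ j, pm j (z j))
        = 1 - ∏ j, pm j (x' j) := by
      have := Finset.sum_erase_add Finset.univ
        (fun z : Fin n → V => ∏ j, pm j (z j)) (Finset.mem_univ x')
      rw [hqsum] at this
      linarith
    rw [h1]
    linarith [hqx'ge, hEtot]
  -- the diagonal term
  set j0 : Fin n := ⟨0, by omega⟩ with hj0def
  set M : ℝ := pm j0 (x' j0) with hMdef
  have hSsub : ∑ j ∈ Finset.univ.erase j0, (1 - pm j (x' j)) < ((n:ℝ) - 1) * ε := by
    have hcard : (Finset.univ.erase j0).card = n - 1 := by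
      rw [Finset.card_erase_of_mem (Finset.mem_univ j0)]
      simp
    have hne : (Finset.univ.erase j0).Nonempty := by
      rw [← Finset.card_pos, hcard]; omega
    calc ∑ j ∈ Finset.univ.erase j0, (1 - pm j (x' j))
        < ∑ _j ∈ Finset.univ.erase j0, ε :=
          Finset.sum_lt_sum_of_nonempty hne fun j _ => heps j
      _ = ((n:ℝ) - 1) * ε := by
          rw [Finset.sum_const, hcard, nsmul_eq_mul, Nat.cast_sub (by omega)]
          norm_num
  have hpx'le : p x' ≤ M := hple x' j0
  have hqx'le : (∏ j, pm j (x' j)) ≤ M := hqle x' j0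
  have hpx'ge : M - ∑ j ∈ Finset.univ.erase j0, (1 - pm j (x' j)) ≤ p x' := by
    have hsplit : M = p x' + ∑ z ∈ Finset.univ.erase x',
        (if z j0 = x' j0 then p z else 0) := by
      rw [hMdef, hm]
      have := Finset.sum_erase_add Finset.univ
        (fun z : Fin n → V => if z j0 = x' j0 then p z else 0) (Finset.mem_univ x')
      simp only [eq_self_iff_true, if_true] at this
      linarith
    have hb : ∑ z ∈ Finset.univ.erase x', (if z j0 = x' j0 then p z else 0)
        ≤ ∑ j ∈ Finset.univ.erase j0, (1 - pm j (x' j)) := by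
      rw [← Finset.sum_filter]
      refine hunion _ _ ?_
      intro z hz
      simp only [Finset.mem_filter, Finset.mem_erase] at hz
      obtain ⟨⟨hzx, _⟩, hz0⟩ := hz
      obtain ⟨j, hj⟩ := Function.ne_iff.mp hzx
      refine ⟨j, Finset.mem_erase.mpr ⟨?_, Finset.mem_univ j⟩, hj⟩
      rintro rfl; exact hj hz0
    linarith
  have hqx'ge' : M - ∑ j ∈ Finset.univ.erase j0, (1 - pm j (x' j))
      ≤ ∏ j, pm j (x' j) := by
    have hP : 1 - ∑ j ∈ Finset.univ.erase j0, (1 - pm j (x' j))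
        ≤ ∏ j ∈ Finset.univ.erase j0, pm j (x' j) :=
      stmt6_weier _ _ (fun j _ => hpm0 j (x' j)) (fun j _ => hpm1 j (x' j))
    have hsplit : (∏ j, pm j (x' j))
        = M * ∏ j ∈ Finset.univ.erase j0, pm j (x' j) := by
      rw [hMdef, ← Finset.mul_prod_erase Finset.univ _ (Finset.mem_univ j0)]
    have hM0 : 0 ≤ M := hpm0 j0 (x' j0)
    have hM1 : M ≤ 1 := hpm1 j0 (x' j0)
    have hS0 : 0 ≤ ∑ j ∈ Finset.univ.erase j0, (1 - pm j (x' j)) :=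
      Finset.sum_nonneg fun j _ => he0 j
    rw [hsplit]
    nlinarith [mul_le_mul_of_nonneg_left hP hM0]
  have habs : |p x' - ∏ j, pm j (x' j)| < ((n:ℝ) - 1) * ε := by
    rw [abs_sub_lt_iff]
    constructor <;> nlinarith
  -- off-diagonal terms are individually small
  have hsmall : ∀ j (v : V), v ≠ x' j → pm j v ≤ 1 - pm j (x' j) := by
    intro j v hv
    have h2 : pm j v + pm j (x' j) ≤ ∑ v', pm j v' := by
      rw [← Finset.sum_pair hv]
      exact Finset.sum_le_sum_of_subset_of_nonneg (Finset.subset_univ _)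
        (fun v' _ _ => hpm0 j v')
    rw [hpmsum j] at h2; linarith
  have hdle : ∀ z : Fin n → V, z ≠ x' → |p z - ∏ j, pm j (z j)| ≤ ε := by
    intro z hz
    obtain ⟨j, hj⟩ := Function.ne_iff.mp hz
    have h1 : p z ≤ ε := by
      calc p z ≤ pm j (z j) := hple z j
        _ ≤ 1 - pm j (x' j) := hsmall j (z j) hj
        _ ≤ ε := (heps j).le
    have h2 : (∏ j', pm j' (z j')) ≤ ε := by
      calc (∏ j', pm j' (z j')) ≤ pm j (z j) := hqle z j
        _ ≤ 1 - pm j (x' j) := hsmall j (z j) hj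
        _ ≤ ε := (heps j).le
    rw [abs_le]
    constructor
    · linarith [hp0 z, hq0 z]
    · linarith [hp0 z, hq0 z]
  -- key bound on the sum of r-th powers
  have hkey : ∑ z : Fin n → V, |p z - ∏ j, pm j (z j)| ^ r
      < (((n:ℝ) - 1) ^ r + 2 * n) * ε ^ r := by
    rw [← Finset.sum_erase_add _ _ (Finset.mem_univ x')]
    have h1 : |p x' - ∏ j, pm j (x' j)| ^ r < ((n:ℝ) - 1) ^ r * ε ^ r := by
      rw [← Real.mul_rpow (by linarith) hε.le]
      exact Real.rpow_lt_rpow (abs_nonneg _) habs hr0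
    have h2 : ∑ z ∈ Finset.univ.erase x', |p z - ∏ j, pm j (z j)| ^ r
        ≤ 2 * n * ε ^ r := by
      have hsplitε : ε ^ (r - 1) * ε = ε ^ r := by
        have h := Real.rpow_add hε (r - 1) 1
        rw [Real.rpow_one, show r - 1 + 1 = r by ring] at h
        exact h.symm
      calc ∑ z ∈ Finset.univ.erase x', |p z - ∏ j, pm j (z j)| ^ r
          ≤ ∑ z ∈ Finset.univ.erase x', ε ^ (r - 1) * |p z - ∏ j, pm j (z j)| := by
            refine Finset.sum_le_sum fun z hz => ?_
            have hzε := hdle z (Finset.ne_of_mem_erase hz)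
            rcases eq_or_lt_of_le (abs_nonneg (p z - ∏ j, pm j (z j))) with h0 | h0
            · rw [← h0, Real.zero_rpow hrne, mul_zero]
            · calc |p z - ∏ j, pm j (z j)| ^ r
                  = |p z - ∏ j, pm j (z j)| ^ (r - 1)
                    * |p z - ∏ j, pm j (z j)| := by
                    have h := Real.rpow_add h0 (r - 1) 1
                    rw [Real.rpow_one, show r - 1 + 1 = r by ring] at h
                    exact h
                _ ≤ ε ^ (r - 1) * |p z - ∏ j, pm j (z j)| :=
                    mul_le_mul_of_nonneg_right
                      (Real.rpow_le_rpow (abs_nonneg _) hzε (by linarith))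
                      (abs_nonneg _)
        _ = ε ^ (r - 1) * ∑ z ∈ Finset.univ.erase x', |p z - ∏ j, pm j (z j)| :=
            (Finset.mul_sum _ _ _).symm
        _ ≤ ε ^ (r - 1) * (2 * n * ε) := by
            refine mul_le_mul_of_nonneg_left ?_ (Real.rpow_nonneg hε.le _)
            calc ∑ z ∈ Finset.univ.erase x', |p z - ∏ j, pm j (z j)|
                ≤ ∑ z ∈ Finset.univ.erase x', (p z + ∏ j, pm j (z j)) := by
                  refine Finset.sum_le_sum fun z _ => ?_
                  rw [abs_le]
                  exact ⟨by linarith [hp0 z, hq0 z], by linarith [hp0 z, hq0 z]⟩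
              _ = (∑ z ∈ Finset.univ.erase x', p z)
                  + ∑ z ∈ Finset.univ.erase x', (∏ j, pm j (z j)) :=
                  Finset.sum_add_distrib
              _ ≤ 2 * n * ε := by linarith [hptail, hqtail]
        _ = 2 * n * ε ^ r := by rw [← hsplitε]; ring
    linarith
  -- conclude by taking r-th roots
  have hC0 : (0:ℝ) ≤ ((n:ℝ) - 1) ^ r + 2 * n := by
    have := Real.rpow_nonneg (x := (n:ℝ) - 1) (by linarith) r
    positivity
  have hfinal := Real.rpow_lt_rpow
    (Finset.sum_nonneg fun z _ => Real.rpow_nonneg (abs_nonneg _) r) hkey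
    (by positivity : (0:ℝ) < 1 / r)
  calc (∑ z : Fin n → V, |p z - ∏ j, pm j (z j)| ^ r) ^ (1 / r)
      < ((((n:ℝ) - 1) ^ r + 2 * n) * ε ^ r) ^ (1 / r) := hfinal
    _ = (((n:ℝ) - 1) ^ r + 2 * n) ^ (1 / r) * ε := by
        rw [Real.mul_rpow hC0 (Real.rpow_nonneg hε.le r),
          ← Real.rpow_mul hε.le, mul_one_div_cancel hrne, Real.rpow_one]
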